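/- Over the alphabet Σ_p ∪ {#}, the string T' = (c_1···c_p)(a_1 a_1 b_1)···(a_p a_p b_p) # b_1 c_1 (a_2 b_2 c_2)···(a_p b_p c_p), obtained from T = (c_1···c_p)(a_1 a_1 b_1)···(a_p a_p b_p)(a_1 b_1 c_1)···(a_p b_p c_p) by substituting the character a_1 at position 4p+1 with the fresh character #, has LZ78 factorization with exactly 5p+1 phrases. -/

import Mathlib

def IsLZ78 {α : Type*} (T : List α) (fs : List (List α)) : Prop :=
  fs.flatten = T ∧ ∀ (k : ℕ) (hk : k < fs.length),
    fs.get ⟨k, hk⟩ ≠ [] ∧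
    ((fs.get ⟨k, hk⟩).dropLast = [] ∨ (fs.get ⟨k, hk⟩).dropLast ∈ fs.take k) ∧
    (k + 1 = fs.length ∨ fs.get ⟨k, hk⟩ ∉ fs.take k)

def chA (i : ℕ) : ℕ := 4 * i
def chB (i : ℕ) : ℕ := 4 * i + 1
def chC (i : ℕ) : ℕ := 4 * i + 2
/-- The fresh character `#`. -/
def chHash : ℕ := 0

/-- `T' = (c_1⋯c_p)(a_1a_1b_1)⋯(a_pa_pb_p) # b_1 c_1 (a_2b_2c_2)⋯(a_pb_pc_p)`,
obtained from `T` by substituting the character `a_1` at position `4p+1` with `#`. -/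
def T78' (p : ℕ) : List ℕ :=
  ((List.range p).map fun i => chC (i + 1)) ++
  (((List.range p).map fun i => [chA (i + 1), chA (i + 1), chB (i + 1)]).flatten) ++
  ([chHash, chB 1, chC 1] ++
    (((List.range (p - 1)).map fun i => [chA (i + 2), chB (i + 2), chC (i + 2)]).flatten))

variable {α : Type*}

def Valid : List (List α) → List (List α) → Prop
  | _, [] => True
  | d, w :: fs => w ≠ [] ∧ (w.dropLast = [] ∨ w.dropLast ∈ d) ∧ (fs = [] ∨ w ∉ d) ∧ Valid (d ++ [w]) fs

def ValidS : List (List α) → List (List α) → Prop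
  | _, [] => True
  | d, w :: fs => w ≠ [] ∧ (w.dropLast = [] ∨ w.dropLast ∈ d) ∧ w ∉ d ∧ ValidS (d ++ [w]) fs

lemma validIdx_iff (fs : List (List α)) : ∀ (d : List (List α)),
    (∀ (k : ℕ) (hk : k < fs.length),
      fs.get ⟨k, hk⟩ ≠ [] ∧
      ((fs.get ⟨k, hk⟩).dropLast = [] ∨ (fs.get ⟨k, hk⟩).dropLast ∈ d ++ fs.take k) ∧
      (k + 1 = fs.length ∨ fs.get ⟨k, hk⟩ ∉ d ++ fs.take k)) ↔ Valid d fs := by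
  induction fs with
  | nil => intro d; simp [Valid]
  | cons w fs ih =>
    intro d
    constructor
    · intro h
      have h0 := h 0 (by simp)
      simp at h0
      refine ⟨h0.1, h0.2.1, h0.2.2, ?_⟩
      rw [← ih (d ++ [w])]
      intro k hk
      have hk' : k + 1 < (w :: fs).length := by simpa using Nat.succ_lt_succ hk
      have := h (k+1) hk'
      simpa [List.take_succ_cons, List.append_assoc, Nat.succ_inj] using this
    · rintro ⟨h1, h2, h3, h4⟩ k hk
      match k with
      | 0 =>
        refine ⟨by simpa using h1, by simpa using h2, ?_⟩
        rcases h3 with h' | h'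
        · left; simp [h']
        · right; simpa using h'
      | k+1 =>
        rw [← ih (d ++ [w])] at h4
        have hk' : k < fs.length := by simpa using hk
        have := h4 k hk'
        simpa [List.take_succ_cons, List.append_assoc, Nat.succ_inj] using this

lemma isLZ78_iff (T : List α) (fs : List (List α)) :
    IsLZ78 T fs ↔ fs.flatten = T ∧ Valid [] fs := by
  rw [IsLZ78]
  constructor
  · rintro ⟨h1, h2⟩
    refine ⟨h1, ?_⟩
    rw [← validIdx_iff]
    simpa using h2
  · rintro ⟨h1, h2⟩
    refine ⟨h1, ?_⟩
    rw [← validIdx_iff] at h2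
    simpa using h2

def Closed (d : List (List α)) : Prop := ∀ w ∈ d, w.dropLast = [] ∨ w.dropLast ∈ d

lemma closed_append (d : List (List α)) (hd : Closed d) (w : List α)
    (hw : w.dropLast = [] ∨ w.dropLast ∈ d) : Closed (d ++ [w]) := by
  intro u hu
  rcases List.mem_append.1 hu with h | h
  · rcases hd u h with h' | h'
    · exact Or.inl h'
    · exact Or.inr (List.mem_append.2 (Or.inl h'))
  · simp at h
    subst h
    rcases hw with h' | h'
    · exact Or.inl h'
    · exact Or.inr (List.mem_append.2 (Or.inl h'))

lemma mem_of_prefix_mem_aux (d : List (List α)) (hd : Closed d) :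
    ∀ (n : ℕ) (w : List α), w.length ≤ n → w ∈ d → ∀ u, u ≠ [] → u <+: w → u ∈ d := by
  intro n
  induction n with
  | zero =>
    intro w hw _ u hu hpre
    have : w = [] := List.length_eq_zero_iff.1 (Nat.le_zero.1 hw)
    subst this
    exact absurd (List.prefix_nil.1 hpre) hu
  | succ n ih =>
    intro w hw hwd u hu hpre
    by_cases heq : u = w
    · subst heq; exact hwd
    · have hlt : u.length < w.length := by
        have := hpre.length_le
        rcases Nat.lt_or_ge u.length w.length with h | h
        · exact h
        · exact absurd (hpre.eq_of_length (Nat.le_antisymm this h)) heq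
      have hdne : w.dropLast ≠ [] := by
        intro h
        have : w.dropLast.length = 0 := by rw [h]; rfl
        rw [List.length_dropLast] at this
        have : u.length = 0 := by omega
        exact hu (List.length_eq_zero_iff.1 this)
      have hdl : w.dropLast ∈ d := by
        rcases hd w hwd with h | h
        · exact absurd h hdne
        · exact h
      have hpre' : u <+: w.dropLast :=
        List.prefix_of_prefix_length_le hpre (List.dropLast_prefix w)
          (by rw [List.length_dropLast]; omega)
      exact ih w.dropLast (by rw [List.length_dropLast]; omega) hdl u hu hpre'

lemma head_ne_case (d : List (List α)) (hd : Closed d) (w1 w2 : List α)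
    (fs gs : List (List α)) (h1 : Valid d (w1 :: fs)) (h2 : Valid d (w2 :: gs))
    (hfl : (w1 :: fs).flatten = (w2 :: gs).flatten) (hlt : w1.length < w2.length) : False := by
  obtain ⟨hne1, _, hlast1, _⟩ := h1
  obtain ⟨_, hdl2, _, _⟩ := h2
  have hfl' : w1 ++ fs.flatten = w2 ++ gs.flatten := by simpa using hfl
  have hp1 : w1 <+: w2 ++ gs.flatten := ⟨fs.flatten, hfl'⟩
  have hp2 : w1 <+: w2 :=
    List.prefix_of_prefix_length_le hp1 (List.prefix_append w2 gs.flatten) (by omega)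
  have hdl2' : w2.dropLast ∈ d := by
    rcases hdl2 with h | h
    · exfalso
      have : w2.dropLast.length = 0 := by rw [h]; rfl
      rw [List.length_dropLast] at this
      have : w1 = [] := List.length_eq_zero_iff.1 (by omega)
      exact hne1 this
    · exact h
  have hpre' : w1 <+: w2.dropLast :=
    List.prefix_of_prefix_length_le hp2 (List.dropLast_prefix w2)
      (by rw [List.length_dropLast]; omega)
  have hw1d : w1 ∈ d :=
    mem_of_prefix_mem_aux d hd w2.dropLast.length w2.dropLast le_rfl hdl2' w1 hne1 hpre'
  have hfs : fs = [] := by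
    rcases hlast1 with h | h
    · exact h
    · exact absurd hw1d h
  subst hfs
  simp at hfl'
  have := congrArg List.length hfl'
  simp at this
  omega

lemma valid_unique : ∀ (fs gs d : List (List α)), Closed d →
    Valid d fs → Valid d gs → fs.flatten = gs.flatten → fs = gs := by
  intro fs
  induction fs with
  | nil =>
    intro gs d _ _ hg hfl
    cases gs with
    | nil => rfl
    | cons w gs =>
      exfalso
      obtain ⟨hne, _, _, _⟩ := hg
      simp at hfl
      exact hne hfl.1
  | cons w1 fs ih =>
    intro gs d hd hf hg hfl
    cases gs with
    | nil =>
      exfalso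
      obtain ⟨hne, _, _, _⟩ := hf
      simp at hfl
      exact hne hfl.1
    | cons w2 gs =>
      have hlen : w1.length = w2.length := by
        rcases Nat.lt_trichotomy w1.length w2.length with h | h | h
        · exact absurd (head_ne_case d hd w1 w2 fs gs hf hg hfl h) (fun x => x)
        · exact h
        · exact absurd (head_ne_case d hd w2 w1 gs fs hg hf hfl.symm h) (fun x => x)
      have hfl' : w1 ++ fs.flatten = w2 ++ gs.flatten := by simpa using hfl
      have heq : w1 = w2 := by
        have hp1 : w1 <+: w2 ++ gs.flatten := ⟨fs.flatten, hfl'⟩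
        have hp2 : w1 <+: w2 :=
          List.prefix_of_prefix_length_le hp1 (List.prefix_append w2 gs.flatten) (by omega)
        exact hp2.eq_of_length hlen
      subst heq
      obtain ⟨_, hdl, _, hf'⟩ := hf
      obtain ⟨_, _, _, hg'⟩ := hg
      have : fs = gs := ih gs (d ++ [w1]) (closed_append d hd w1 hdl) hf' hg'
        (by simpa using hfl')
      rw [this]

lemma validS_append (xs : List (List α)) : ∀ (d ys : List (List α)),
    ValidS d xs → ValidS (d ++ xs) ys → ValidS d (xs ++ ys) := by
  induction xs with
  | nil => intro d ys _ h; simpa using h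
  | cons w xs ih =>
    intro d ys ⟨h1, h2, h3, h4⟩ h5
    exact ⟨h1, h2, h3, ih (d ++ [w]) ys h4 (by simpa [List.append_assoc] using h5)⟩

lemma valid_append_validS (xs : List (List α)) : ∀ (d ys : List (List α)),
    ValidS d xs → Valid (d ++ xs) ys → Valid d (xs ++ ys) := by
  induction xs with
  | nil => intro d ys _ h; simpa using h
  | cons w xs ih =>
    intro d ys ⟨h1, h2, h3, h4⟩ h5
    exact ⟨h1, h2, Or.inr h3, ih (d ++ [w]) ys h4 (by simpa [List.append_assoc] using h5)⟩

lemma validS_flatten_range (d0 : List (List α)) (g : ℕ → List (List α)) (n : ℕ)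
    (h : ∀ i < n, ValidS (d0 ++ ((List.range i).map g).flatten) (g i)) :
    ValidS d0 (((List.range n).map g).flatten) := by
  induction n with
  | zero => simp [ValidS]
  | succ n ih =>
    rw [List.range_succ, List.map_append, List.flatten_append]
    refine validS_append _ d0 _ (ih fun i hi => h i (by omega)) ?_
    simpa using h n (by omega)

def dC (p : ℕ) : List (List ℕ) := (((List.range p).map fun i => [[chC (i+1)]]).flatten)
def dA (p : ℕ) : List (List ℕ) := (((List.range p).map fun i => [[chA (i+1)], [chA (i+1), chB (i+1)]]).flatten)
def dH : List (List ℕ) := [[chHash], [chB 1]]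
def dE (q : ℕ) : List (List ℕ) := (((List.range q).map fun i => [[chC (i+1), chA (i+2)], [chB (i+2)]]).flatten)

def ph (p : ℕ) : List (List ℕ) := dC p ++ (dA p ++ (dH ++ (dE (p-1) ++ [[chC p]])))

lemma validS_dC (p : ℕ) : ValidS [] (dC p) := by
  refine validS_flatten_range [] _ p fun i hi => ?_
  simp [ValidS, chC, chA, chB, chHash]

lemma validS_dA (p : ℕ) : ValidS ([] ++ dC p) (dA p) := by
  refine validS_flatten_range _ _ p fun i hi => ?_
  simp [ValidS, dC, chC, chA, chB, chHash]
  omega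

lemma validS_dH (p : ℕ) : ValidS (([] ++ dC p) ++ dA p) dH := by
  simp [ValidS, dH, dC, dA, chC, chA, chB, chHash]
  constructor <;> intro x hx <;> omega

lemma validS_dE (p : ℕ) (hp : 1 ≤ p) : ValidS ((([] ++ dC p) ++ dA p) ++ dH) (dE (p-1)) := by
  refine validS_flatten_range _ _ (p-1) fun i hi => ?_
  simp [ValidS, dH, dC, dA, chC, chA, chB, chHash]
  refine ⟨Or.inl (by omega), ?_, ?_, ?_⟩ <;> intros <;> omega

lemma valid_last (p : ℕ) (hp : 1 ≤ p) :
    Valid (((([] ++ dC p) ++ dA p) ++ dH) ++ dE (p-1)) [[chC p]] := by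
  simp [Valid]

lemma valid_ph (p : ℕ) (hp : 1 ≤ p) : Valid [] (ph p) := by
  refine valid_append_validS _ _ _ (validS_dC p) ?_
  refine valid_append_validS _ _ _ (validS_dA p) ?_
  refine valid_append_validS _ _ _ (validS_dH p) ?_
  refine valid_append_validS _ _ _ (validS_dE p hp) ?_
  exact valid_last p hp

lemma flat_flat (g : ℕ → List (List ℕ)) (n : ℕ) :
    (((List.range n).map g).flatten).flatten = (((List.range n).map fun i => (g i).flatten)).flatten := by
  induction n with
  | zero => rfl
  | succ n ih => rw [List.range_succ]; simp [ih]

lemma flat_single (f : ℕ → ℕ) (n : ℕ) :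
    ((List.range n).map fun i => [f i]).flatten = (List.range n).map f := by
  induction n with
  | zero => rfl
  | succ n ih => rw [List.range_succ]; simp [ih]

lemma len_flat {β : Type*} (g : ℕ → List β) (k : ℕ) (hg : ∀ i, (g i).length = k) (m : ℕ) :
    (((List.range m).map g).flatten).length = m * k := by
  induction m with
  | zero => simp
  | succ m ih => rw [List.range_succ]; simp [ih, hg, Nat.succ_mul]

lemma shift (n : ℕ) :
    (((List.range n).map fun i => [chC (i+1), chA (i+2), chB (i+2)]).flatten) ++ [chC (n+1)]
      = chC 1 :: (((List.range n).map fun i => [chA (i+2), chB (i+2), chC (i+2)]).flatten) := by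
  induction n with
  | zero => rfl
  | succ n ih =>
    rw [List.range_succ]
    simp only [List.map_append, List.flatten_append, List.map_cons, List.map_nil,
      List.flatten_cons, List.flatten_nil, List.append_nil]
    have key : ∀ L : List ℕ, (L ++ [chC (n+1), chA (n+2), chB (n+2)]) ++ [chC (n+1+1)]
        = (L ++ [chC (n+1)]) ++ [chA (n+2), chB (n+2), chC (n+2)] := by
      intro L
      have : (n : ℕ) + 1 + 1 = n + 2 := rfl
      rw [this]
      simp
    rw [key, ih]
    simp

lemma ph_flatten (p : ℕ) (hp : 1 ≤ p) : (ph p).flatten = T78' p := by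
  rw [ph, T78']
  have h1 := shift (p-1)
  rw [show p - 1 + 1 = p by omega] at h1
  simp only [List.flatten_append, dC, dA, dH, dE, flat_flat, flat_single,
    List.flatten_cons, List.flatten_nil, List.append_nil, List.cons_append,
    List.nil_append, List.singleton_append, List.append_assoc]
  rw [h1]

lemma ph_length (p : ℕ) (hp : 1 ≤ p) : (ph p).length = 5 * p + 1 := by
  rw [ph]
  simp only [List.length_append, dC, dA, dH, dE]
  rw [len_flat (fun i => [[chC (i+1)]]) 1 (fun i => rfl),
      len_flat (fun i => [[chA (i+1)], [chA (i+1), chB (i+1)]]) 2 (fun i => rfl),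
      len_flat (fun i => [[chC (i+1), chA (i+2)], [chB (i+2)]]) 2 (fun i => rfl)]
  simp
  omega

lemma T78'_length (p : ℕ) (hp : 1 ≤ p) : (T78' p).length = 7 * p := by
  rw [T78']
  simp only [List.length_append]
  rw [len_flat (fun i => [chA (i+1), chA (i+1), chB (i+1)]) 3 (fun i => rfl),
      len_flat (fun i => [chA (i+2), chB (i+2), chC (i+2)]) 3 (fun i => rfl)]
  simp
  omega

/-- The edited string `T'` of length `7p` has LZ78 factorization with exactly
`5p + 1` phrases. -/
theorem stmt11 (p : ℕ) (hp : 1 ≤ p) :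
    (T78' p).length = 7 * p ∧
    (∃ fs, IsLZ78 (T78' p) fs) ∧
    (∀ fs, IsLZ78 (T78' p) fs → fs.length = 5 * p + 1) := by
  have hfl := ph_flatten p hp
  have hval := valid_ph p hp
  refine ⟨T78'_length p hp, ⟨ph p, (isLZ78_iff _ _).2 ⟨hfl, hval⟩⟩, ?_⟩
  intro fs hfs
  rw [isLZ78_iff] at hfs
  have hfe : fs = ph p := valid_unique fs (ph p) []
    (fun w hw => absurd hw (List.not_mem_nil (a := w))) hfs.2 hval (by rw [hfs.1, hfl])
  rw [hfe, ph_length p hp]
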